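/- arXiv:1809.07375 — 5 statements merged into one kernel-verified Lean document; each statement's English description precedes it below -/
import Mathlib

section
/- For every fixed real y > 0 and every real β with β > 0 and β ≠ 1, the function x ↦ ď_β(y, x) is convex on the open interval (0, ∞). -/
open Real

/-- The convex part `ď_β(y, x) = [β>1]·x^β/β − [β≤2]·y·x^(β−1)/(β−1) + y^β/(β(β−1))`. -/
noncomputable def betaDivCheck (β y x : ℝ) : ℝ :=
  (if 1 < β then x ^ β / β else 0) - (if β ≤ 2 then y * x ^ (β - 1) / (β - 1) else 0)
    + y ^ β / (β * (β - 1))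

lemma convexOn_rpow_Ioi_of_nonpos {p : ℝ} (hp : p ≤ 0) :
    ConvexOn ℝ (Set.Ioi (0 : ℝ)) fun x : ℝ => x ^ p := by
  have hderiv : Set.EqOn (deriv fun x : ℝ => x ^ p) (fun x => p * x ^ (p - 1))
      (Set.Ioi (0 : ℝ)) := fun x hx =>
    Real.deriv_rpow_const x p
  refine convexOn_of_deriv2_nonneg (convex_Ioi 0) ?_ ?_ ?_ ?_
  · intro x hx
    exact (Real.continuousAt_rpow_const x p (Or.inl (ne_of_gt hx))).continuousWithinAt
  · rw [interior_Ioi]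
    intro x hx
    exact (Real.hasDerivAt_rpow_const (p := p) (Or.inl (ne_of_gt hx))).differentiableAt.differentiableWithinAt
  · rw [interior_Ioi, differentiableOn_congr hderiv]
    intro x hx
    exact ((Real.hasDerivAt_rpow_const (p := p - 1)
      (Or.inl (ne_of_gt hx))).differentiableAt.const_mul p).differentiableWithinAt
  · rw [interior_Ioi]
    intro x hx
    have h2 : deriv (deriv fun x : ℝ => x ^ p) x
        = deriv (fun x : ℝ => p * x ^ (p - 1)) x := by
      apply Filter.EventuallyEq.deriv_eq
      filter_upwards [Ioi_mem_nhds hx] with z hz using hderiv hz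
    have h3 : deriv (fun x : ℝ => p * x ^ (p - 1)) x = p * ((p - 1) * x ^ (p - 1 - 1)) := by
      rw [deriv_const_mul _ (Real.hasDerivAt_rpow_const (p := p - 1)
        (Or.inl (ne_of_gt hx))).differentiableAt,
        (Real.hasDerivAt_rpow_const (p := p - 1) (Or.inl (ne_of_gt hx))).deriv]
    simp only [Function.iterate_succ, Function.iterate_zero, Function.comp_apply, id_eq]
    rw [h2, h3]
    have ht := Real.rpow_pos_of_pos hx (p - 1 - 1)
    have hpp : 0 ≤ p * (p - 1) := by have := mul_nonneg (neg_nonneg.mpr hp) (by linarith : (0:ℝ) ≤ 1 - p); nlinarith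
    calc (0:ℝ) ≤ p * (p - 1) * x ^ (p - 1 - 1) := mul_nonneg hpp ht.le
      _ = p * ((p - 1) * x ^ (p - 1 - 1)) := by ring

/-- For fixed `y > 0` and `β > 0`, `β ≠ 1`, the function `x ↦ ď_β(y, x)` is convex
on `(0, ∞)`. -/
theorem betaDivCheck_convexOn (y : ℝ) (hy : 0 < y) (β : ℝ) (hβ : 0 < β) (hβ1 : β ≠ 1) :
    ConvexOn ℝ (Set.Ioi (0 : ℝ)) (fun x => betaDivCheck β y x) := by
  unfold betaDivCheck
  rcases lt_or_gt_of_ne hβ1 with hlt | hgt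
  · -- β < 1
    have hif1 : ¬ (1 < β) := not_lt.mpr hlt.le
    have hif2 : β ≤ 2 := by linarith
    simp only [hif1, if_false, hif2, if_true, zero_sub]
    have hc : 0 < y / (1 - β) := div_pos hy (by linarith)
    have hconv : ConvexOn ℝ (Set.Ioi (0 : ℝ))
        fun x : ℝ => (y / (1 - β)) * x ^ (β - 1) :=
      (convexOn_rpow_Ioi_of_nonpos (by linarith : β - 1 ≤ 0)).smul hc.le
    have := hconv.add_const (y ^ β / (β * (β - 1)))
    convert this using 2 with x
    have h0 : β - 1 ≠ 0 := fun h => hβ1 (by linarith)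
    have h1 : (1:ℝ) - β ≠ 0 := fun h => hβ1 (by linarith)
    · rfl
    simp only [Pi.add_apply]
    field_simp
    ring
  · -- β > 1
    have hif1 : (1 < β) := hgt
    have hβ1' : 0 < β - 1 := by linarith
    have h1 : ConvexOn ℝ (Set.Ioi (0 : ℝ)) fun x : ℝ => x ^ β / β := by
      have := (convexOn_rpow hgt.le).subset (Set.Ioi_subset_Ici le_rfl) (convex_Ioi 0)
      have h := this.smul (le_of_lt (by positivity : (0:ℝ) < 1 / β))
      convert h using 2 with x
      · rfl
      · rfl
      simp [smul_eq_mul]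
      ring
    by_cases hif2 : β ≤ 2
    · simp only [hif1, if_true, hif2]
      have hconc : ConcaveOn ℝ (Set.Ioi (0 : ℝ)) fun x : ℝ => x ^ (β - 1) :=
        (Real.concaveOn_rpow (by linarith) (by linarith)).subset
          (Set.Ioi_subset_Ici le_rfl) (convex_Ioi 0)
      have hc : (0:ℝ) ≤ y / (β - 1) := le_of_lt (div_pos hy hβ1')
      have h2 : ConvexOn ℝ (Set.Ioi (0 : ℝ))
          fun x : ℝ => -((y / (β - 1)) * x ^ (β - 1)) := (hconc.smul hc).neg
      have := (h1.add h2).add_const (y ^ β / (β * (β - 1)))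
      convert this using 2 with x
      · rfl
      simp only [Pi.add_apply]
      field_simp
      ring
    · simp only [hif1, if_true, hif2, if_false, sub_zero]
      exact h1.add_const _
end

section
/- For all fixed reals y > 0 and x > 0, the β-divergence d_β(y, x) tends to the Itakura–Saito divergence y/x − log(y/x) − 1 as β tends to 0 from the right (along values β > 0). -/
open Real Filter

/-- The β-divergence `d_β(y, x)` for `β > 0`, `β ≠ 1`, `y > 0`, `x > 0`. -/
noncomputable def betaDiv (β y x : ℝ) : ℝ :=
  y * (y ^ (β - 1) - x ^ (β - 1)) / (β * (β - 1)) + x ^ (β - 1) * (x - y) / β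

/-- As `β → 0⁺`, the β-divergence `d_β(y, x)` tends to the Itakura–Saito divergence
`y/x − log(y/x) − 1`. -/
theorem betaDiv_tendsto_IS (y x : ℝ) (hy : 0 < y) (hx : 0 < x) :
    Tendsto (fun β => betaDiv β y x) (nhdsWithin 0 (Set.Ioi (0 : ℝ)))
      (nhds (y / x - Real.log (y / x) - 1)) := by
  set N : ℝ → ℝ := fun β =>
    y * (y ^ (β - 1) - x ^ (β - 1)) + (β - 1) * (x ^ (β - 1) * (x - y)) with hNdef
  -- derivative of β ↦ y ^ (β - 1) at 0
  have hd1 : HasDerivAt (fun β : ℝ => y ^ (β - 1)) (y ^ ((0:ℝ) - 1) * Real.log y) 0 := by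
    have := ((Real.hasStrictDerivAt_const_rpow hy ((0:ℝ) - 1)).hasDerivAt.comp 0
      ((hasDerivAt_id (0:ℝ)).sub_const 1))
    simpa [Function.comp_def] using this
  have hd2 : HasDerivAt (fun β : ℝ => x ^ (β - 1)) (x ^ ((0:ℝ) - 1) * Real.log x) 0 := by
    have := ((Real.hasStrictDerivAt_const_rpow hx ((0:ℝ) - 1)).hasDerivAt.comp 0
      ((hasDerivAt_id (0:ℝ)).sub_const 1))
    simpa [Function.comp_def] using this
  set D : ℝ := y * (y ^ ((0:ℝ) - 1) * Real.log y - x ^ ((0:ℝ) - 1) * Real.log x)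
      + (1 * (x ^ ((0:ℝ) - 1) * (x - y)) +
        ((0:ℝ) - 1) * (x ^ ((0:ℝ) - 1) * Real.log x * (x - y))) with hDdef
  have hN : HasDerivAt N D 0 := by
    have h1 : HasDerivAt (fun β : ℝ => y * (y ^ (β - 1) - x ^ (β - 1)))
        (y * (y ^ ((0:ℝ) - 1) * Real.log y - x ^ ((0:ℝ) - 1) * Real.log x)) 0 :=
      (hd1.sub hd2).const_mul y
    have h2 : HasDerivAt (fun β : ℝ => (β - 1) * (x ^ (β - 1) * (x - y)))
        (1 * (x ^ ((0:ℝ) - 1) * (x - y)) +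
          ((0:ℝ) - 1) * (x ^ ((0:ℝ) - 1) * Real.log x * (x - y))) 0 := by
      have := ((hasDerivAt_id (0:ℝ)).sub_const 1).mul (hd2.mul_const (x - y))
      simpa [mul_assoc, mul_comm, mul_left_comm, Pi.mul_def] using this
    exact h1.add h2
  have hN0 : N 0 = 0 := by
    simp only [hNdef, Real.rpow_neg_one, zero_sub]
    field_simp
    ring
  -- slope limit
  have hslope : Tendsto (fun β => N β / β) (nhdsWithin 0 (Set.Ioi (0 : ℝ))) (nhds D) := by
    have := hasDerivAt_iff_tendsto_slope.mp hN
    have h2 : Tendsto (slope N 0) (nhdsWithin 0 (Set.Ioi (0 : ℝ))) (nhds D) :=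
      this.mono_left (nhdsWithin_mono _ (by intro z hz; exact ne_of_gt hz))
    refine h2.congr (fun β => ?_)
    simp [slope_def_field, hN0, div_eq_inv_mul]
  -- (β - 1)⁻¹ → -1
  have hinv : Tendsto (fun β : ℝ => (β - 1)⁻¹) (nhdsWithin 0 (Set.Ioi (0 : ℝ)))
      (nhds (-1)) := by
    have : ContinuousAt (fun β : ℝ => (β - 1)⁻¹) 0 := by
      apply ContinuousAt.inv₀ (by fun_prop)
      norm_num
    have h := this.tendsto.mono_left (nhdsWithin_le_nhds (s := Set.Ioi (0:ℝ)))
    norm_num at h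
    exact h
  have hmul := hslope.mul hinv
  have key : Tendsto (fun β => N β / β * (β - 1)⁻¹) (nhdsWithin 0 (Set.Ioi (0 : ℝ)))
      (nhds (y / x - Real.log (y / x) - 1)) := by
    convert hmul using 2
    rw [hDdef, Real.log_div hy.ne' hx.ne']
    simp only [Real.rpow_neg_one, zero_sub]
    field_simp
    ring
  refine key.congr' ?_
  filter_upwards [Ioo_mem_nhdsGT_of_mem (by constructor <;> norm_num : (0:ℝ) ∈ Set.Ico 0 1)]
    with β hβ
  obtain ⟨hβ0, hβ1⟩ := hβ
  have hb0 : β ≠ 0 := ne_of_gt hβ0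
  have hb1 : β - 1 ≠ 0 := by intro h; exact (ne_of_lt hβ1) (by linarith)
  simp only [betaDiv, hNdef]
  field_simp
end

section
/- For every real β with β > 0 and β ≠ 1 and all reals y > 0, x > 0, the β-divergence is nonnegative: d_β(y, x) ≥ 0; moreover d_β(y, x) = 0 if and only if x = y. -/
open Real

/-- Nonnegativity of the β-divergence, with equality to zero iff `x = y`. -/
theorem betaDiv_nonneg_and_eq_zero_iff (β : ℝ) (hβ : 0 < β) (hβ1 : β ≠ 1)
    (y x : ℝ) (hy : 0 < y) (hx : 0 < x) :
    0 ≤ betaDiv β y x ∧ (betaDiv β y x = 0 ↔ x = y) := by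
  have hβ0 : β ≠ 0 := hβ.ne'
  have hβ1' : β - 1 ≠ 0 := sub_ne_zero.mpr hβ1
  set s : ℝ := (y - x) / x with hs_def
  have hs : -1 ≤ s := by
    rw [hs_def, le_div_iff₀ hx]
    nlinarith
  have hs0 : s = 0 ↔ x = y := by
    rw [hs_def, div_eq_zero_iff, sub_eq_zero]
    constructor
    · rintro (h | h)
      · exact h.symm
      · exact absurd h hx.ne'
    · intro h; exact Or.inl h.symm
  have h1s : 1 + s = y / x := by rw [hs_def]; field_simp; ring
  have hA : x ^ β = x ^ (β - 1) * x := by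
    rw [← rpow_add_one hx.ne' (β - 1)]; ring_nf
  have hB : y ^ β = y ^ (β - 1) * y := by
    rw [← rpow_add_one hy.ne' (β - 1)]; ring_nf
  have hxβ : (0:ℝ) < x ^ β := rpow_pos_of_pos hx β
  have hpow : (1 + s) ^ β = y ^ β / x ^ β := by
    rw [h1s, div_rpow hy.le hx.le]
  -- key identity
  have key : betaDiv β y x = x ^ β * ((1 + s) ^ β - (1 + β * s)) / (β * (β - 1)) := by
    rw [hpow, hs_def, betaDiv, hA, hB]
    field_simp
    ring
  have hT := key
  constructor
  · rcases lt_or_gt_of_ne hβ1 with hlt | hgt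
    · -- 0 < β < 1 : (1+s)^β ≤ 1 + β s, β(β-1) < 0
      have hle : (1 + s) ^ β ≤ 1 + β * s := by
        rcases eq_or_ne s 0 with hse | hsne
        · rw [hse]; norm_num
        · exact (rpow_one_add_lt_one_add_mul_self hs hsne hβ hlt).le
      have hden : β * (β - 1) < 0 := mul_neg_of_pos_of_neg hβ (by linarith)
      rw [key]
      apply div_nonneg_of_nonpos _ hden.le
      nlinarith
    · have hle : 1 + β * s ≤ (1 + s) ^ β := by
        rcases eq_or_ne s 0 with hse | hsne
        · rw [hse]; norm_num
        · exact (one_add_mul_self_lt_rpow_one_add hs hsne hgt).le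
      have hden : 0 < β * (β - 1) := mul_pos hβ (by linarith)
      rw [key]
      apply div_nonneg _ hden.le
      nlinarith
  · constructor
    · intro h0
      by_contra hxy
      have hsne : s ≠ 0 := fun h => hxy (hs0.mp h)
      rcases lt_or_gt_of_ne hβ1 with hlt | hgt
      · have hlt' := rpow_one_add_lt_one_add_mul_self hs hsne hβ hlt
        have hden : β * (β - 1) < 0 := mul_neg_of_pos_of_neg hβ (by linarith)
        rw [key] at h0
        have : x ^ β * ((1 + s) ^ β - (1 + β * s)) = 0 := by
          field_simp at h0
          linarith [h0]
        nlinarith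
      · have hlt' := one_add_mul_self_lt_rpow_one_add hs hsne hgt
        have hden : β * (β - 1) ≠ 0 := mul_ne_zero hβ0 hβ1'
        rw [key, div_eq_zero_iff] at h0
        rcases h0 with h0 | h0
        · nlinarith
        · exact hden h0
    · rintro rfl
      have : s = 0 := hs0.mpr rfl
      rw [key, this]
      simp
end

section
/- Let β be real with β > 0 and β ≠ 1, let y > 0, let J be a finite index set, and for each j ∈ J let c_j ≥ 0, w_j > 0 and w′_j > 0 be reals. Set x′ = Σ_{j∈J} w′_j·c_j and assume x′ > 0. Then ď_β(y, Σ_{j∈J} w_j·c_j) ≤ Σ_{j∈J} (w′_j·c_j / x′) · ď_β(y, x′·w_j / w′_j). -/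
open Real

lemma convexOn_rpow_neg {p : ℝ} (hp : p < 0) :
    ConvexOn ℝ (Set.Ioi (0:ℝ)) fun x : ℝ ↦ x ^ p := by
  have := StrictConvexOn.convexOn <| strictConvexOn_of_deriv2_pos' (convex_Ioi (0:ℝ))
    (fun x hx => (Real.continuousAt_rpow_const x p (Or.inl (ne_of_gt hx))).continuousWithinAt)
    (f := fun x : ℝ ↦ x ^ p) ?_
  · exact this
  · intro x hx
    have hx0 : (0:ℝ) < x := hx
    show 0 < deriv (deriv fun y : ℝ ↦ y ^ p) x
    have h1 : deriv (fun y : ℝ ↦ y ^ p) =ᶠ[nhds x] fun y ↦ p * y ^ (p - 1) := by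
      filter_upwards [eventually_ne_nhds hx0.ne'] with y hy
      exact (Real.hasDerivAt_rpow_const (Or.inl hy)).deriv
    rw [h1.deriv_eq]
    have h2 : deriv (fun y : ℝ ↦ p * y ^ (p - 1)) x = p * ((p - 1) * x ^ (p - 1 - 1)) :=
      (((Real.hasDerivAt_rpow_const (p := p - 1) (Or.inl hx0.ne'))).const_mul p).deriv
    rw [h2, ← mul_assoc]
    exact mul_pos (mul_pos_of_neg_of_neg hp (by linarith)) (Real.rpow_pos_of_pos hx0 _)

lemma convexOn_betaDivCheck (β y : ℝ) (hβ : 0 < β) (hβ1 : β ≠ 1) (hy : 0 < y) :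
    ConvexOn ℝ (Set.Ioi (0:ℝ)) (betaDivCheck β y) := by
  have hIoi : Set.Ioi (0:ℝ) ⊆ Set.Ici 0 := Set.Ioi_subset_Ici_self
  have hA : ConvexOn ℝ (Set.Ioi (0:ℝ)) (fun x : ℝ ↦ if 1 < β then x ^ β / β else 0) := by
    by_cases h1 : 1 < β
    · simp only [if_pos h1]
      have := ((convexOn_rpow h1.le).subset hIoi (convex_Ioi 0)).smul
        (c := 1 / β) (by positivity)
      convert this using 2 with x
      · rfl
      · rfl
      simp [smul_eq_mul]; ring
    · simp only [if_neg h1]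
      exact convexOn_const 0 (convex_Ioi 0)
  have hB : ConvexOn ℝ (Set.Ioi (0:ℝ))
      (fun x : ℝ ↦ -(if β ≤ 2 then y * x ^ (β - 1) / (β - 1) else 0)) := by
    by_cases h2 : β ≤ 2
    · simp only [if_pos h2]
      by_cases h1 : 1 < β
      · have hcc : ConvexOn ℝ (Set.Ioi (0:ℝ)) (fun x : ℝ ↦ -(x ^ (β - 1))) :=
          ((Real.concaveOn_rpow (by linarith) (by linarith)).subset hIoi (convex_Ioi 0)).neg
        have := hcc.smul (c := y / (β - 1)) (div_nonneg hy.le (by linarith))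
        convert this using 2 with x
        · rfl
        · rfl
        simp [smul_eq_mul]; ring
      · have hblt : β < 1 := lt_of_le_of_ne (not_lt.mp h1) hβ1
        have hcc := convexOn_rpow_neg (p := β - 1) (by linarith)
        have := hcc.smul (c := y / (1 - β)) (div_nonneg hy.le (by linarith))
        convert this using 2 with x
        · rfl
        · rfl
        rw [smul_eq_mul, div_mul_eq_mul_div, ← neg_div,
          div_eq_div_iff (by linarith : β - 1 ≠ (0:ℝ)) (by linarith : 1 - β ≠ (0:ℝ))]
        ring
    · simp only [if_neg h2]
      simpa using convexOn_const (0:ℝ) (convex_Ioi (0:ℝ))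
  have hC : ConvexOn ℝ (Set.Ioi (0:ℝ)) (fun _ : ℝ ↦ y ^ β / (β * (β - 1))) :=
    convexOn_const _ (convex_Ioi 0)
  have heq : betaDivCheck β y = fun x : ℝ ↦
      ((if 1 < β then x ^ β / β else 0) + -(if β ≤ 2 then y * x ^ (β - 1) / (β - 1) else 0))
        + y ^ β / (β * (β - 1)) := by
    funext x; simp [betaDivCheck, sub_eq_add_neg]
  rw [heq]
  exact (hA.add hB).add hC

/-- Jensen-inequality step: for `x′ = Σ_j w′_j c_j > 0`,
`ď_β(y, Σ_j w_j c_j) ≤ Σ_j (w′_j c_j / x′) · ď_β(y, x′ w_j / w′_j)`. -/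
theorem betaDivCheck_jensen {J : Type*} [Fintype J]
    (β : ℝ) (hβ : 0 < β) (hβ1 : β ≠ 1) (y : ℝ) (hy : 0 < y)
    (c w w' : J → ℝ) (hc : ∀ j, 0 ≤ c j) (hw : ∀ j, 0 < w j) (hw' : ∀ j, 0 < w' j)
    (x' : ℝ) (hx' : x' = ∑ j, w' j * c j) (hx'pos : 0 < x') :
    betaDivCheck β y (∑ j, w j * c j)
      ≤ ∑ j, (w' j * c j / x') * betaDivCheck β y (x' * w j / w' j) := by
  have hconv := convexOn_betaDivCheck β y hβ hβ1 hy
  set lam : J → ℝ := fun j => w' j * c j / x' with hlam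
  set t : J → ℝ := fun j => x' * w j / w' j with ht
  have h0 : ∀ j ∈ Finset.univ (α := J), 0 ≤ lam j := fun j _ =>
    div_nonneg (mul_nonneg (hw' j).le (hc j)) hx'pos.le
  have h1 : ∑ j, lam j = 1 := by
    rw [hlam, ← Finset.sum_div, ← hx', div_self hx'pos.ne']
  have hmem : ∀ j ∈ Finset.univ (α := J), t j ∈ Set.Ioi (0:ℝ) := fun j _ =>
    div_pos (mul_pos hx'pos (hw j)) (hw' j)
  have hsum : ∑ j, lam j • t j = ∑ j, w j * c j := by
    refine Finset.sum_congr rfl fun j _ => ?_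
    have hne1 : w' j ≠ 0 := (hw' j).ne'
    have hne2 : x' ≠ 0 := hx'pos.ne'
    rw [smul_eq_mul, hlam, ht]
    field_simp
  have := hconv.map_sum_le h0 h1 hmem
  rw [hsum] at this
  simpa [smul_eq_mul] using this
end

section
/- Let M ≥ 2 be an integer, let L be the (M−1)×M finite-difference matrix, let A be an M×M real diagonal matrix whose diagonal entries are all nonnegative and at least one of which is strictly positive, let λ > 0, and let b ∈ ℝ^M have all entries nonnegative. Then the linear system (A + 2λ·LᵀL)·h = b has a unique solution h ∈ ℝ^M, and every entry of h is nonnegative. -/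
open Matrix

/-- The finite-difference matrix `L ∈ ℝ^{(M−1)×M}`, with `(L v)_m = v_{m+1} − v_m`. -/
def finiteDiffMatrix (M : ℕ) : Matrix (Fin (M - 1)) (Fin M) ℝ :=
  Matrix.of fun i j => if (j : ℕ) = (i : ℕ) then -1 else if (j : ℕ) = (i : ℕ) + 1 then 1 else 0

lemma fd_mulVec (M : ℕ) (h : Fin M → ℝ) (m : Fin (M - 1)) :
    (finiteDiffMatrix M).mulVec h m
      = h ⟨(m : ℕ) + 1, by have := m.isLt; omega⟩ - h ⟨(m : ℕ), by have := m.isLt; omega⟩ := by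
  have ha : ((m : ℕ)) < M := by have := m.isLt; omega
  have hb : ((m : ℕ)) + 1 < M := by have := m.isLt; omega
  have hsplit : ∀ k : Fin M,
      (finiteDiffMatrix M) m k * h k
        = (if k = (⟨(m:ℕ), ha⟩ : Fin M) then -h k else 0)
          + (if k = (⟨(m:ℕ)+1, hb⟩ : Fin M) then h k else 0) := by
    intro k
    simp only [finiteDiffMatrix, Matrix.of_apply, Fin.ext_iff]
    split_ifs <;> first | omega | ring
  simp only [Matrix.mulVec, dotProduct]
  rw [Finset.sum_congr rfl (fun k _ => hsplit k), Finset.sum_add_distrib,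
    Finset.sum_ite_eq' Finset.univ, Finset.sum_ite_eq' Finset.univ]
  simp
  ring

lemma fdT_mulVec (M : ℕ) (w : Fin (M - 1) → ℝ) (j : Fin M) :
    (finiteDiffMatrix M)ᵀ.mulVec w j
      = (if hj : 1 ≤ (j : ℕ) then w ⟨(j : ℕ) - 1, by have := j.isLt; omega⟩ else 0)
        - (if hj : (j : ℕ) < M - 1 then w ⟨(j : ℕ), hj⟩ else 0) := by
  have hsplit : ∀ m : Fin (M - 1),
      (finiteDiffMatrix M)ᵀ j m * w m
        = (if hj : 1 ≤ (j : ℕ) then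
            (if m = (⟨(j:ℕ) - 1, by have := j.isLt; omega⟩ : Fin (M-1)) then w m else 0) else 0)
          + (if hj : (j : ℕ) < M - 1 then
            (if m = (⟨(j:ℕ), hj⟩ : Fin (M-1)) then -w m else 0) else 0) := by
    intro m
    simp only [finiteDiffMatrix, Matrix.transpose_apply, Matrix.of_apply, Fin.ext_iff]
    have := m.isLt
    split_ifs <;> first | omega | ring
  simp only [Matrix.mulVec, dotProduct]
  rw [Finset.sum_congr rfl (fun m _ => hsplit m), Finset.sum_add_distrib]
  by_cases h1 : 1 ≤ (j : ℕ) <;> by_cases h2 : (j : ℕ) < M - 1 <;>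
    simp [h1, h2, Finset.sum_ite_eq' Finset.univ] <;> ring

lemma fdTL_mulVec (M : ℕ) (h : Fin M → ℝ) (j : Fin M) :
    ((finiteDiffMatrix M)ᵀ * finiteDiffMatrix M).mulVec h j
      = (if hj : 1 ≤ (j : ℕ) then h j - h ⟨(j : ℕ) - 1, by have := j.isLt; omega⟩ else 0)
        + (if hj : (j : ℕ) + 1 < M then h j - h ⟨(j : ℕ) + 1, hj⟩ else 0) := by
  rw [← Matrix.mulVec_mulVec, fdT_mulVec]
  have hlt := j.isLt
  by_cases h1 : 1 ≤ (j : ℕ) <;> by_cases h2 : (j : ℕ) < M - 1 <;>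
    simp only [h1, h2, dif_pos, dif_neg, not_false_iff, fd_mulVec]
  · rw [dif_pos (show (j:ℕ) + 1 < M by omega)]
    simp only [show (j:ℕ) - 1 + 1 = (j:ℕ) from by omega, Fin.eta]
    ring
  · rw [dif_neg (show ¬ ((j:ℕ) + 1 < M) by omega)]
    simp only [show (j:ℕ) - 1 + 1 = (j:ℕ) from by omega, Fin.eta]
    ring
  · rw [dif_pos (show (j:ℕ) + 1 < M by omega)]
    simp only [Fin.eta]
    ring
  · rw [dif_neg (show ¬ ((j:ℕ) + 1 < M) by omega)]
    ring

lemma diag_mulVec (M : ℕ) (A : Matrix (Fin M) (Fin M) ℝ)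
    (hA_offdiag : ∀ i j, i ≠ j → A i j = 0) (h : Fin M → ℝ) (j : Fin M) :
    A.mulVec h j = A j j * h j := by
  simp only [Matrix.mulVec, dotProduct]
  rw [Finset.sum_eq_single j]
  · intro k _ hk; rw [hA_offdiag j k (Ne.symm hk), zero_mul]
  · intro hk; exact absurd (Finset.mem_univ j) hk

lemma solution_nonneg
    (M : ℕ) (hM : 2 ≤ M) (A : Matrix (Fin M) (Fin M) ℝ)
    (hA_offdiag : ∀ i j, i ≠ j → A i j = 0)
    (hA_nonneg : ∀ i, 0 ≤ A i i)
    (hA_pos : ∃ i, 0 < A i i)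
    (lam : ℝ) (hlam : 0 < lam)
    (b : Fin M → ℝ) (hb : ∀ i, 0 ≤ b i)
    (h : Fin M → ℝ)
    (hsol : (A + (2 * lam) • ((finiteDiffMatrix M)ᵀ * finiteDiffMatrix M)).mulVec h = b)
    (i : Fin M) : 0 ≤ h i := by
  have hne : Nonempty (Fin M) := ⟨⟨0, by omega⟩⟩
  obtain ⟨i₀, hi₀⟩ := Finite.exists_min h
  by_contra hc
  push_neg at hc
  have hc0 : h i₀ < 0 := lt_of_le_of_lt (hi₀ i) hc
  set c := h i₀ with hcdef
  -- the expanded equation at each j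
  have heq : ∀ j : Fin M,
      A j j * h j + (2 * lam) *
        ((if hj : 1 ≤ (j : ℕ) then h j - h ⟨(j : ℕ) - 1, by have := j.isLt; omega⟩ else 0)
         + (if hj : (j : ℕ) + 1 < M then h j - h ⟨(j : ℕ) + 1, hj⟩ else 0)) = b j := by
    intro j
    have := congrFun hsol j
    rwa [Matrix.add_mulVec, Matrix.smul_mulVec, Pi.add_apply, Pi.smul_apply,
      diag_mulVec M A hA_offdiag, fdTL_mulVec, smul_eq_mul] at this
  -- key step: at a minimizer, A is zero there and neighbors are also minimizers
  have key : ∀ j : Fin M, h j = c →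
      A j j * c = 0
      ∧ (∀ hj : (j : ℕ) + 1 < M, h ⟨(j : ℕ) + 1, hj⟩ = c)
      ∧ (∀ _hj : 1 ≤ (j : ℕ), h ⟨(j : ℕ) - 1, by have := j.isLt; omega⟩ = c) := by
    intro j hjc
    have hEq := heq j
    rw [hjc] at hEq
    set t1 : ℝ := (if hj : 1 ≤ (j : ℕ) then c - h ⟨(j : ℕ) - 1, by have := j.isLt; omega⟩ else 0) with ht1
    set t2 : ℝ := (if hj : (j : ℕ) + 1 < M then c - h ⟨(j : ℕ) + 1, hj⟩ else 0) with ht2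
    have ht1le : t1 ≤ 0 := by
      rw [ht1]; split
      · have := hi₀ ⟨(j : ℕ) - 1, by have := j.isLt; omega⟩; linarith
      · exact le_refl 0
    have ht2le : t2 ≤ 0 := by
      rw [ht2]; split
      · next hj => have := hi₀ ⟨(j : ℕ) + 1, hj⟩; linarith
      · exact le_refl 0
    have hAle : A j j * c ≤ 0 := mul_nonpos_of_nonneg_of_nonpos (hA_nonneg j) (le_of_lt hc0)
    have hbj := hb j
    have hA0 : A j j * c = 0 := by nlinarith
    have ht10 : t1 = 0 := by nlinarith
    have ht20 : t2 = 0 := by nlinarith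
    refine ⟨hA0, ?_, ?_⟩
    · intro hj
      rw [ht2, dif_pos hj] at ht20
      linarith
    · intro hj
      rw [ht1, dif_pos hj] at ht10
      linarith
  -- propagate the minimum to all indices
  have up : ∀ n : ℕ, ∀ hn : (i₀ : ℕ) + n < M, h ⟨(i₀ : ℕ) + n, hn⟩ = c := by
    intro n
    induction n with
    | zero => intro hn; simp [hcdef]
    | succ n ih =>
      intro hn
      have hn' : (i₀ : ℕ) + n < M := by omega
      have hstep := (key ⟨(i₀ : ℕ) + n, hn'⟩ (ih hn')).2.1 (by show (i₀ : ℕ) + n + 1 < M; omega)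
      refine Eq.trans (congrArg h (Fin.ext ?_)) hstep
      simp; omega
  have down : ∀ n : ℕ, ∀ hn : n ≤ (i₀ : ℕ), h ⟨(i₀ : ℕ) - n, by have := i₀.isLt; omega⟩ = c := by
    intro n
    induction n with
    | zero => intro hn; simp [hcdef]
    | succ n ih =>
      intro hn
      have hn' : n ≤ (i₀ : ℕ) := by omega
      have h1 : 1 ≤ (((⟨(i₀ : ℕ) - n, by have := i₀.isLt; omega⟩ : Fin M)) : ℕ) := by
        simp; omega
      have hstep := (key ⟨(i₀ : ℕ) - n, by have := i₀.isLt; omega⟩ (ih hn')).2.2 h1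
      refine Eq.trans (congrArg h (Fin.ext ?_)) hstep
      simp; omega
  have hall : ∀ j : Fin M, h j = c := by
    intro j
    rcases le_or_gt (i₀ : ℕ) (j : ℕ) with hle | hlt
    · have := up ((j : ℕ) - (i₀ : ℕ)) (by have := j.isLt; omega)
      have hj : (⟨(i₀ : ℕ) + ((j : ℕ) - (i₀ : ℕ)), by have := j.isLt; omega⟩ : Fin M) = j :=
        Fin.ext (by simp; omega)
      rwa [hj] at this
    · have := down ((i₀ : ℕ) - (j : ℕ)) (by omega)
      have hj : (⟨(i₀ : ℕ) - ((i₀ : ℕ) - (j : ℕ)), by have := i₀.isLt; omega⟩ : Fin M) = j :=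
        Fin.ext (by simp; omega)
      rwa [hj] at this
  obtain ⟨i₁, hi₁⟩ := hA_pos
  have := (key i₁ (hall i₁)).1
  nlinarith

/-- If `A` is diagonal with nonnegative entries, at least one of which is positive,
`λ > 0`, and `b` has nonnegative entries, then the linear system `(A + 2λ·LᵀL)·h = b`
has a unique solution, and every entry of that solution is nonnegative. -/
theorem linear_system_unique_nonneg_solution
    (M : ℕ) (hM : 2 ≤ M) (A : Matrix (Fin M) (Fin M) ℝ)
    (hA_offdiag : ∀ i j, i ≠ j → A i j = 0)
    (hA_nonneg : ∀ i, 0 ≤ A i i)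
    (hA_pos : ∃ i, 0 < A i i)
    (lam : ℝ) (hlam : 0 < lam)
    (b : Fin M → ℝ) (hb : ∀ i, 0 ≤ b i) :
    (∃! h : Fin M → ℝ,
        (A + (2 * lam) • ((finiteDiffMatrix M)ᵀ * finiteDiffMatrix M)).mulVec h = b)
    ∧ (∀ h : Fin M → ℝ,
        (A + (2 * lam) • ((finiteDiffMatrix M)ᵀ * finiteDiffMatrix M)).mulVec h = b →
        ∀ i, 0 ≤ h i) := by
  set Q := A + (2 * lam) • ((finiteDiffMatrix M)ᵀ * finiteDiffMatrix M) with hQ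
  have nonneg : ∀ (b' : Fin M → ℝ), (∀ i, 0 ≤ b' i) → ∀ h : Fin M → ℝ,
      Q.mulVec h = b' → ∀ i, 0 ≤ h i := fun b' hb' h hsol i =>
    solution_nonneg M hM A hA_offdiag hA_nonneg hA_pos lam hlam b' hb' h hsol i
  have hker : ∀ z : Fin M → ℝ, Q.mulVec z = 0 → z = 0 := by
    intro z hz
    have h1 : ∀ i, 0 ≤ z i := nonneg 0 (fun i => le_refl 0) z hz
    have h2 : ∀ i, 0 ≤ (-z) i := by
      apply nonneg 0 (fun i => le_refl 0)
      rw [Matrix.mulVec_neg, hz, neg_zero]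
    funext i
    have ha := h1 i
    have hb2 := h2 i
    simp only [Pi.neg_apply] at hb2
    simp only [Pi.zero_apply]
    linarith
  have hinj : Function.Injective Q.mulVec := by
    intro x y hxy
    have : Q.mulVec (x - y) = 0 := by rw [Matrix.mulVec_sub, hxy, sub_self]
    have := hker _ this
    exact sub_eq_zero.mp this
  have hinj' : Function.Injective Q.mulVecLin := by
    exact hinj
  have hsurj : Function.Surjective Q.mulVecLin :=
    (LinearMap.injective_iff_surjective).mp hinj'
  obtain ⟨h, hh⟩ := hsurj b
  rw [Matrix.mulVecLin_apply] at hh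
  exact ⟨⟨h, hh, fun y hy => hinj (hy.trans hh.symm)⟩, nonneg b hb⟩
end
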